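/- Let Z be an abelian group, Δ ⊆ Z a finite set, D ⊆ Z a finite set, and R ≥ 1 a natural number. If every x ∈ D satisfies |Δ ∩ (x+Δ)| ≥ R, then E_4(D) · R⁴ ≤ E_8(Δ). -/

import Mathlib

/-- The additive energy `E₄(A)`: the number of quadruples
`(a₁,a₂,a₃,a₄) ∈ A⁴` with `a₁ + a₂ = a₃ + a₄`. -/
def E4 {Z : Type*} [AddCommGroup Z] [DecidableEq Z] (A : Finset Z) : ℕ :=
  ((A ×ˢ A ×ˢ A ×ˢ A).filter fun p => p.1 + p.2.1 = p.2.2.1 + p.2.2.2).card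

/-- The additive energy `E₈(A)`: the number of octuples
`(a₁,…,a₈) ∈ A⁸` with `a₁ + a₂ + a₃ + a₄ = a₅ + a₆ + a₇ + a₈`. -/
def E8 {Z : Type*} [AddCommGroup Z] [DecidableEq Z] (A : Finset Z) : ℕ :=
  ((A ×ˢ A ×ˢ A ×ˢ A ×ˢ A ×ˢ A ×ˢ A ×ˢ A).filter fun p =>
    p.1 + p.2.1 + p.2.2.1 + p.2.2.2.1
      = p.2.2.2.2.1 + p.2.2.2.2.2.1 + p.2.2.2.2.2.2.1 + p.2.2.2.2.2.2.2).card

/-- If every `x ∈ D` has at least `R` representations as a difference of elements of `Δ`,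
then `E₄(D)·R⁴ ≤ E₈(Δ)`. -/
theorem E4_mul_R_pow_four_le_E8 {Z : Type*} [AddCommGroup Z] [DecidableEq Z]
    (Δ D : Finset Z) (R : ℕ) (hR : 1 ≤ R)
    (hrep : ∀ x ∈ D, R ≤ (Δ ∩ Δ.image (x + ·)).card) :
    E4 D * R ^ 4 ≤ E8 Δ := by
  classical
  set T : Z → Finset (Z × Z) := fun x => (Δ ×ˢ Δ).filter fun q => q.1 = x + q.2 with hT
  have hTcard : ∀ x ∈ D, R ≤ (T x).card := by
    intro x hx
    refine (hrep x hx).trans (Finset.card_le_card_of_injOn (fun a => (a, a - x)) ?_ ?_)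
    · intro a ha
      simp only [Finset.mem_coe, Finset.mem_inter, Finset.mem_image] at ha
      obtain ⟨ha1, b, hb, hba⟩ := ha
      simp only [Finset.mem_coe, hT, Finset.mem_filter, Finset.mem_product]
      refine ⟨⟨ha1, ?_⟩, by abel⟩
      have : a - x = b := by rw [← hba]; abel
      rw [this]; exact hb
    · intro a _ b _ h
      exact congrArg Prod.fst h
  have hTmem : ∀ x (q : Z × Z), q ∈ T x → q.1 ∈ Δ ∧ q.2 ∈ Δ ∧ q.1 = x + q.2 := by
    intro x q hq
    simp only [hT, Finset.mem_filter, Finset.mem_product] at hq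
    exact ⟨hq.1.1, hq.1.2, hq.2⟩
  set Q := ((D ×ˢ D ×ˢ D ×ˢ D).filter fun p => p.1 + p.2.1 = p.2.2.1 + p.2.2.2) with hQ
  have hlow : E4 D * R ^ 4 ≤
      (Q.sigma fun p => T p.1 ×ˢ T p.2.1 ×ˢ T p.2.2.1 ×ˢ T p.2.2.2).card := by
    rw [Finset.card_sigma]
    have hbound : ∀ p ∈ Q, R ^ 4 ≤ (T p.1 ×ˢ T p.2.1 ×ˢ T p.2.2.1 ×ˢ T p.2.2.2).card := by
      intro p hp
      simp only [hQ, Finset.mem_filter, Finset.mem_product] at hp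
      obtain ⟨⟨h1, h2, h3, h4⟩, _⟩ := hp
      simp only [Finset.card_product]
      calc R ^ 4 = R * (R * (R * R)) := by ring
        _ ≤ _ := by
          gcongr
          exacts [hTcard _ h1, hTcard _ h2, hTcard _ h3, hTcard _ h4]
    calc E4 D * R ^ 4 = ∑ _p ∈ Q, R ^ 4 := by
          rw [Finset.sum_const, smul_eq_mul, show E4 D = Q.card from rfl, mul_comm]
      _ ≤ _ := Finset.sum_le_sum hbound
  refine hlow.trans ?_
  rw [E8]
  refine Finset.card_le_card_of_injOn
    (fun s => (s.2.1.1, s.2.2.1.1, s.2.2.2.1.2, s.2.2.2.2.2, s.2.1.2, s.2.2.1.2,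
      s.2.2.2.1.1, s.2.2.2.2.1)) ?_ ?_
  · rintro ⟨⟨p1, p2, p3, p4⟩, ⟨a1, b1⟩, ⟨a2, b2⟩, ⟨a3, b3⟩, ⟨a4, b4⟩⟩ hs
    simp only [Finset.mem_coe, Finset.mem_sigma, Finset.mem_product] at hs
    obtain ⟨hpQ, h1, h2, h3, h4⟩ := hs
    obtain ⟨ha1, hb1, he1⟩ := hTmem _ _ h1
    obtain ⟨ha2, hb2, he2⟩ := hTmem _ _ h2
    obtain ⟨ha3, hb3, he3⟩ := hTmem _ _ h3
    obtain ⟨ha4, hb4, he4⟩ := hTmem _ _ h4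
    simp only [hQ, Finset.mem_filter, Finset.mem_product] at hpQ
    simp only [Finset.mem_coe, Finset.mem_filter, Finset.mem_product]
    refine ⟨⟨ha1, ha2, hb3, hb4, hb1, hb2, ha3, ha4⟩, ?_⟩
    simp only at he1 he2 he3 he4
    have key : p1 + p2 = p3 + p4 := hpQ.2
    rw [he1, he2, he3, he4]
    calc (p1 + b1) + (p2 + b2) + b3 + b4
        = (p1 + p2) + (b1 + b2 + b3 + b4) := by abel
      _ = (p3 + p4) + (b1 + b2 + b3 + b4) := by rw [key]
      _ = b1 + b2 + (p3 + b3) + (p4 + b4) := by abel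
  · rintro ⟨⟨p1, p2, p3, p4⟩, ⟨a1, b1⟩, ⟨a2, b2⟩, ⟨a3, b3⟩, ⟨a4, b4⟩⟩ hs
      ⟨⟨q1, q2, q3, q4⟩, ⟨c1, d1⟩, ⟨c2, d2⟩, ⟨c3, d3⟩, ⟨c4, d4⟩⟩ hs' h
    simp only [Finset.mem_coe, Finset.mem_sigma, Finset.mem_product] at hs
    simp only [Finset.mem_coe, Finset.mem_sigma, Finset.mem_product] at hs'
    obtain ⟨hpQ, h1, h2, h3, h4⟩ := hs
    obtain ⟨hqQ, h1', h2', h3', h4'⟩ := hs'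
    have he1 := (hTmem _ _ h1).2.2
    have he2 := (hTmem _ _ h2).2.2
    have he3 := (hTmem _ _ h3).2.2
    have he4 := (hTmem _ _ h4).2.2
    have he1' := (hTmem _ _ h1').2.2
    have he2' := (hTmem _ _ h2').2.2
    have he3' := (hTmem _ _ h3').2.2
    have he4' := (hTmem _ _ h4').2.2
    simp only [Prod.mk.injEq] at h
    obtain ⟨e1, e2, e3, e4, e5, e6, e7, e8⟩ := h
    subst e1 e2 e3 e4 e5 e6 e7 e8
    have f1 : p1 = q1 := add_right_cancel (he1.symm.trans he1')
    have f2 : p2 = q2 := add_right_cancel (he2.symm.trans he2')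
    have f3 : p3 = q3 := add_right_cancel (he3.symm.trans he3')
    have f4 : p4 = q4 := add_right_cancel (he4.symm.trans he4')
    subst f1 f2 f3 f4
    rfl
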